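/- Let Ω ⊂ ℝ^m be bounded and measurable, w a synaptic kernel, f and g an activation function and a learning modulation function with Lipschitz constants L and K, and γ ≥ 0 fixed. Then there exist ρ > 0 and a constant C = C(ρ) such that whenever u and v are solutions in C([0,ρ]; L¹(Ω)) of the initial value problem u_t(x,t) = −u(x,t) + ∫_Ω w(x,y)[1 + γ g(u(x,t) − u(y,t))] f(u(y,t)) dy with initial data u_0 and v_0 in L¹(Ω) respectively, one has sup_{t∈[0,ρ]} ‖u(·,t) − v(·,t)‖_{L¹(Ω)} ≤ C ‖u_0 − v_0‖_{L¹(Ω)}. -/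

import Mathlib

open MeasureTheory Set


lemma aux_F_int {m : ℕ} (Ω : Set (Fin m → ℝ))
    (w : (Fin m → ℝ) → (Fin m → ℝ) → ℝ)
    (f g : ℝ → ℝ) (γ : ℝ) (hγ : 0 ≤ γ)
    (hf_cont : Continuous f) (hg_cont : Continuous g)
    (hf_range : ∀ s, 0 ≤ f s ∧ f s ≤ 1) (hg_range : ∀ s, 0 ≤ g s ∧ g s ≤ 1)
    (x : Fin m → ℝ) (hwx_meas : Measurable (w x)) (hwx_int : Integrable (w x))
    (φ : (Fin m → ℝ) → ℝ) (hφ : Measurable φ) :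
    IntegrableOn (fun y => w x y * (1 + γ * g (φ x - φ y)) * f (φ y)) Ω := by
  have hmeas : Measurable (fun y => w x y * (1 + γ * g (φ x - φ y)) * f (φ y)) := by
    exact (hwx_meas.mul (measurable_const.add
      ((hg_cont.measurable.comp (measurable_const.sub hφ)).const_mul γ))).mul
      (hf_cont.measurable.comp hφ)
  have hdom : Integrable (fun y => (1 + γ) * |w x y|) := hwx_int.abs.const_mul _
  refine MeasureTheory.Integrable.mono (hdom.integrableOn) hmeas.aestronglyMeasurable ?_
  filter_upwards with y
  have h1 : 0 ≤ 1 + γ * g (φ x - φ y) := by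
    have := (hg_range (φ x - φ y)).1
    positivity
  have h2 : 1 + γ * g (φ x - φ y) ≤ 1 + γ := by
    nlinarith [(hg_range (φ x - φ y)).2]
  have h3 := (hf_range (φ y)).1
  have h4 := (hf_range (φ y)).2
  have h5 : (0:ℝ) ≤ |w x y| := abs_nonneg _
  simp only [Real.norm_eq_abs, abs_mul, abs_abs]
  rw [abs_of_nonneg h1, abs_of_nonneg h3, abs_of_nonneg (by positivity : (0:ℝ) ≤ 1 + γ)]
  nlinarith [mul_le_mul (mul_le_mul_of_nonneg_left h2 h5) h4 h3
    (by positivity : (0:ℝ) ≤ |w x y| * (1 + γ))]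

lemma aux_key {m : ℕ} (Ω : Set (Fin m → ℝ)) (hΩ_meas : MeasurableSet Ω)
    (w : (Fin m → ℝ) → (Fin m → ℝ) → ℝ) (Cinf Cw : ℝ)
    (x : Fin m → ℝ)
    (hwx_meas : Measurable (w x))
    (hwx_int : Integrable (w x))
    (hwx_bdd : ∀ y, |w x y| ≤ Cinf)
    (hwx_L1 : (∫ y, |w x y|) ≤ Cw)
    (f g : ℝ → ℝ) (hf_cont : Continuous f) (hg_cont : Continuous g)
    (hf_range : ∀ s, 0 ≤ f s ∧ f s ≤ 1) (hg_range : ∀ s, 0 ≤ g s ∧ g s ≤ 1)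
    (L K γ : ℝ) (hL : 0 ≤ L) (hK : 0 ≤ K) (hγ : 0 ≤ γ)
    (hf_lip : ∀ a b, |f a - f b| ≤ L * |a - b|)
    (hg_lip : ∀ a b, |g a - g b| ≤ K * |a - b|)
    (φ ψ : (Fin m → ℝ) → ℝ) (hφ : Measurable φ) (hψ : Measurable ψ)
    (hφi : IntegrableOn φ Ω) (hψi : IntegrableOn ψ Ω) :
    |(∫ y in Ω, w x y * (1 + γ * g (φ x - φ y)) * f (φ y)) -
      ∫ y in Ω, w x y * (1 + γ * g (ψ x - ψ y)) * f (ψ y)| ≤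
      ((1+γ)*L + γ*K) * Cinf * (∫ y in Ω, |φ y - ψ y|) + γ * K * Cw * |φ x - ψ x| := by
  have hCinf : 0 ≤ Cinf := le_trans (abs_nonneg _) (hwx_bdd x)
  have hFu := aux_F_int Ω w f g γ hγ hf_cont hg_cont hf_range hg_range x hwx_meas hwx_int φ hφ
  have hFv := aux_F_int Ω w f g γ hγ hf_cont hg_cont hf_range hg_range x hwx_meas hwx_int ψ hψ
  rw [← integral_sub hFu hFv]
  have hdiff_int : IntegrableOn (fun y => |φ y - ψ y|) Ω := (hφi.sub hψi).abs
  set bound : (Fin m → ℝ) → ℝ := fun y =>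
    ((1+γ)*L + γ*K) * Cinf * |φ y - ψ y| + (γ * K * |φ x - ψ x|) * |w x y| with hbound_def
  have hbound_int : IntegrableOn bound Ω :=
    (hdiff_int.const_mul _).add ((hwx_int.abs.integrableOn).const_mul _)
  have hptwise : ∀ y ∈ Ω,
      |w x y * (1 + γ * g (φ x - φ y)) * f (φ y) -
        w x y * (1 + γ * g (ψ x - ψ y)) * f (ψ y)| ≤ bound y := by
    intro y _
    have hw := hwx_bdd y
    have hwn : (0:ℝ) ≤ |w x y| := abs_nonneg _
    have e : w x y * (1 + γ * g (φ x - φ y)) * f (φ y) -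
        w x y * (1 + γ * g (ψ x - ψ y)) * f (ψ y) =
        w x y * ((1 + γ * g (φ x - φ y)) * (f (φ y) - f (ψ y))) +
        w x y * (γ * (g (φ x - φ y) - g (ψ x - ψ y)) * f (ψ y)) := by ring
    rw [e]
    refine le_trans (abs_add_le _ _) ?_
    have hT1 : |w x y * ((1 + γ * g (φ x - φ y)) * (f (φ y) - f (ψ y)))| ≤
        Cinf * ((1+γ) * (L * |φ y - ψ y|)) := by
      rw [abs_mul, abs_mul]
      have h1 : |1 + γ * g (φ x - φ y)| ≤ 1 + γ := by
        rw [abs_of_nonneg (by nlinarith [(hg_range (φ x - φ y)).1])]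
        nlinarith [(hg_range (φ x - φ y)).2]
      have h2 := hf_lip (φ y) (ψ y)
      gcongr
    have hT2 : |w x y * (γ * (g (φ x - φ y) - g (ψ x - ψ y)) * f (ψ y))| ≤
        Cinf * (γ * K * |φ y - ψ y|) + (γ * K * |φ x - ψ x|) * |w x y| := by
      rw [abs_mul]
      have h1 : |γ * (g (φ x - φ y) - g (ψ x - ψ y)) * f (ψ y)| ≤
          γ * (K * (|φ x - ψ x| + |φ y - ψ y|)) := by
        rw [abs_mul, abs_mul, abs_of_nonneg hγ, abs_of_nonneg (hf_range (ψ y)).1]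
        have h2 : |g (φ x - φ y) - g (ψ x - ψ y)| ≤ K * (|φ x - ψ x| + |φ y - ψ y|) := by
          refine le_trans (hg_lip _ _) ?_
          have e2 : (φ x - φ y) - (ψ x - ψ y) = (φ x - ψ x) - (φ y - ψ y) := by ring
          rw [e2]
          exact mul_le_mul_of_nonneg_left (abs_sub _ _) hK
        have h3 := (hf_range (ψ y)).1
        have h4 := (hf_range (ψ y)).2
        have h5 : |g (φ x - φ y) - g (ψ x - ψ y)| * f (ψ y) ≤
            K * (|φ x - ψ x| + |φ y - ψ y|) * 1 :=
          mul_le_mul h2 h4 h3 (le_trans (abs_nonneg _) h2)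
        nlinarith [mul_le_mul_of_nonneg_left h5 hγ]
      calc |w x y| * |γ * (g (φ x - φ y) - g (ψ x - ψ y)) * f (ψ y)|
          ≤ |w x y| * (γ * (K * (|φ x - ψ x| + |φ y - ψ y|))) := by gcongr
        _ ≤ Cinf * (γ * K * |φ y - ψ y|) + (γ * K * |φ x - ψ x|) * |w x y| := by
            nlinarith [mul_nonneg (mul_nonneg (mul_nonneg (sub_nonneg.2 hw) hγ) hK)
              (abs_nonneg (φ y - ψ y)), mul_nonneg (mul_nonneg (mul_nonneg hwn hγ) hK)
              (abs_nonneg (φ x - ψ x))]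
    calc _ ≤ Cinf * ((1+γ) * (L * |φ y - ψ y|)) +
          (Cinf * (γ * K * |φ y - ψ y|) + (γ * K * |φ x - ψ x|) * |w x y|) :=
        add_le_add hT1 hT2
      _ = bound y := by rw [hbound_def]; ring
  calc |∫ y in Ω, (w x y * (1 + γ * g (φ x - φ y)) * f (φ y) -
          w x y * (1 + γ * g (ψ x - ψ y)) * f (ψ y))|
      ≤ ∫ y in Ω, |w x y * (1 + γ * g (φ x - φ y)) * f (φ y) -
          w x y * (1 + γ * g (ψ x - ψ y)) * f (ψ y)| := by
        simpa [Real.norm_eq_abs] using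
          MeasureTheory.norm_integral_le_integral_norm (μ := volume.restrict Ω)
            (fun y => w x y * (1 + γ * g (φ x - φ y)) * f (φ y) -
              w x y * (1 + γ * g (ψ x - ψ y)) * f (ψ y))
    _ ≤ ∫ y in Ω, bound y := setIntegral_mono_on (hFu.sub hFv).abs hbound_int hΩ_meas hptwise
    _ ≤ ((1+γ)*L + γ*K) * Cinf * (∫ y in Ω, |φ y - ψ y|) + γ * K * Cw * |φ x - ψ x| := by
        rw [hbound_def, integral_add (hdiff_int.const_mul _) ((hwx_int.abs.integrableOn).const_mul _),
          integral_const_mul, integral_const_mul]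
        have h1 : (∫ y in Ω, |w x y|) ≤ Cw :=
          le_trans (setIntegral_le_integral hwx_int.abs
            (Filter.Eventually.of_forall fun y => abs_nonneg _)) hwx_L1
        have h2 : 0 ≤ γ * K * |φ x - ψ x| := by positivity
        nlinarith [mul_le_mul_of_nonneg_left h1 h2]


-- aux_cont: continuity in s of the nonlocal term
lemma aux_cont {m : ℕ} (Ω : Set (Fin m → ℝ)) (hΩ_meas : MeasurableSet Ω)
    (w : (Fin m → ℝ) → (Fin m → ℝ) → ℝ) (Cinf Cw : ℝ)
    (x : Fin m → ℝ)
    (hwx_meas : Measurable (w x)) (hwx_int : Integrable (w x))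
    (hwx_bdd : ∀ y, |w x y| ≤ Cinf) (hwx_L1 : (∫ y, |w x y|) ≤ Cw)
    (f g : ℝ → ℝ) (hf_cont : Continuous f) (hg_cont : Continuous g)
    (hf_range : ∀ s, 0 ≤ f s ∧ f s ≤ 1) (hg_range : ∀ s, 0 ≤ g s ∧ g s ≤ 1)
    (L K γ : ℝ) (hL : 0 ≤ L) (hK : 0 ≤ K) (hγ : 0 ≤ γ)
    (hf_lip : ∀ a b, |f a - f b| ≤ L * |a - b|)
    (hg_lip : ∀ a b, |g a - g b| ≤ K * |a - b|)
    (ρ : ℝ) (u : (Fin m → ℝ) → ℝ → ℝ)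
    (hu_slice : ∀ s, Measurable fun y => u y s)
    (huint : ∀ s ∈ Icc (0:ℝ) ρ, IntegrableOn (fun y => u y s) Ω)
    (hucont : ∀ t ∈ Icc (0:ℝ) ρ,
      Filter.Tendsto (fun s => ∫ y in Ω, |u y s - u y t|) (nhdsWithin t (Icc 0 ρ)) (nhds 0))
    (hu_cx : ContinuousOn (u x) (Icc 0 ρ)) :
    ContinuousOn (fun s => ∫ y in Ω, w x y * (1 + γ * g (u x s - u y s)) * f (u y s))
      (Icc 0 ρ) := by
  intro t₀ ht₀
  set F : ℝ → ℝ := fun s => ∫ y in Ω, w x y * (1 + γ * g (u x s - u y s)) * f (u y s) with hF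
  have hb : ∀ s ∈ Icc (0:ℝ) ρ, |F s - F t₀| ≤
      ((1+γ)*L + γ*K) * Cinf * (∫ y in Ω, |u y s - u y t₀|) + γ * K * Cw * |u x s - u x t₀| := by
    intro s hs
    exact aux_key Ω hΩ_meas w Cinf Cw x hwx_meas hwx_int hwx_bdd hwx_L1 f g hf_cont hg_cont
      hf_range hg_range L K γ hL hK hγ hf_lip hg_lip
      (fun y => u y s) (fun y => u y t₀) (hu_slice s) (hu_slice t₀) (huint s hs) (huint t₀ ht₀)
  have h1 : Filter.Tendsto (fun s => ((1+γ)*L + γ*K) * Cinf * (∫ y in Ω, |u y s - u y t₀|))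
      (nhdsWithin t₀ (Icc 0 ρ)) (nhds 0) := by
    simpa using (hucont t₀ ht₀).const_mul (((1+γ)*L + γ*K) * Cinf)
  have h2 : Filter.Tendsto (fun s => γ * K * Cw * |u x s - u x t₀|)
      (nhdsWithin t₀ (Icc 0 ρ)) (nhds 0) := by
    have := ((hu_cx t₀ ht₀).sub_const (u x t₀)).abs
    simpa using this.const_mul (γ * K * Cw)
  have hzero : Filter.Tendsto (fun s => F s - F t₀) (nhdsWithin t₀ (Icc 0 ρ)) (nhds 0) := by
    refine squeeze_zero_norm' ?_ (by simpa using h1.add h2)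
    filter_upwards [self_mem_nhdsWithin] with s hs
    simpa [Real.norm_eq_abs] using hb s hs
  have := hzero.add_const (F t₀)
  simpa [ContinuousWithinAt] using this

set_option maxHeartbeats 1000000 in
/-- Continuous dependence on initial data in `L¹(Ω)`: for fixed `γ` there
exist `ρ > 0` and `C = C(ρ)` such that any two solutions `u, v ∈ C([0,ρ]; L¹(Ω))` of the
plastic neural field IVP with initial data `u₀, v₀ ∈ L¹(Ω)` satisfy
`sup_{t ∈ [0,ρ]} ‖u(·,t) - v(·,t)‖_{L¹(Ω)} ≤ C ‖u₀ - v₀‖_{L¹(Ω)}`. -/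
theorem stmt_15 {m : ℕ} (hm : 1 ≤ m)
    (Ω : Set (Fin m → ℝ)) (hΩ_meas : MeasurableSet Ω) (hΩ_bdd : Bornology.IsBounded Ω)
    (w : (Fin m → ℝ) → (Fin m → ℝ) → ℝ)
    (Cinf Cw Kw : ℝ) (hCw : 0 < Cw) (hKw : 0 < Kw)
    (hw_meas : Measurable (Function.uncurry w))
    (hw_bdd : ∀ x y, |w x y| ≤ Cinf)
    (hw_int : ∀ x, Integrable fun y => w x y)
    (hw_L1 : ∀ x, (∫ y, |w x y|) ≤ Cw)
    (hw_lip : ∀ x x', (∫ y, |w x y - w x' y|) ≤ Kw * ‖x - x'‖)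
    (f g : ℝ → ℝ)
    (hf_smooth : ContDiff ℝ 1 f) (hf_deriv : ∃ B, ∀ s, |deriv f s| ≤ B)
    (hf_range : ∀ s, 0 ≤ f s ∧ f s ≤ 1)
    (hg_smooth : ContDiff ℝ 1 g) (hg_deriv : ∃ B, ∀ s, |deriv g s| ≤ B)
    (hg_range : ∀ s, 0 ≤ g s ∧ g s ≤ 1)
    (L K : ℝ) (hL : 0 ≤ L) (hK : 0 ≤ K)
    (hf_lip : ∀ a b, |f a - f b| ≤ L * |a - b|)
    (hg_lip : ∀ a b, |g a - g b| ≤ K * |a - b|)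
    (γ : ℝ) (hγ : 0 ≤ γ) :
    ∃ ρ > (0:ℝ), ∃ C > (0:ℝ),
      ∀ (u₀ v₀ : (Fin m → ℝ) → ℝ), IntegrableOn u₀ Ω → IntegrableOn v₀ Ω →
      ∀ (u v : (Fin m → ℝ) → ℝ → ℝ),
        Measurable (Function.uncurry u) → Measurable (Function.uncurry v) →
        (∀ t ∈ Icc (0:ℝ) ρ, IntegrableOn (fun x => u x t) Ω) →
        (∀ t ∈ Icc (0:ℝ) ρ, IntegrableOn (fun x => v x t) Ω) →
        (∀ t ∈ Icc (0:ℝ) ρ,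
          Filter.Tendsto (fun s => ∫ x in Ω, |u x s - u x t|)
            (nhdsWithin t (Icc 0 ρ)) (nhds 0)) →
        (∀ t ∈ Icc (0:ℝ) ρ,
          Filter.Tendsto (fun s => ∫ x in Ω, |v x s - v x t|)
            (nhdsWithin t (Icc 0 ρ)) (nhds 0)) →
        (∀ x ∈ Ω, u x 0 = u₀ x) → (∀ x ∈ Ω, v x 0 = v₀ x) →
        (∀ x ∈ Ω, ∀ t ∈ Icc (0:ℝ) ρ,
          HasDerivWithinAt (u x)
            (-(u x t) + ∫ y in Ω, w x y * (1 + γ * g (u x t - u y t)) * f (u y t))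
            (Icc 0 ρ) t) →
        (∀ x ∈ Ω, ∀ t ∈ Icc (0:ℝ) ρ,
          HasDerivWithinAt (v x)
            (-(v x t) + ∫ y in Ω, w x y * (1 + γ * g (v x t - v y t)) * f (v y t))
            (Icc 0 ρ) t) →
        ∀ t ∈ Icc (0:ℝ) ρ,
          (∫ x in Ω, |u x t - v x t|) ≤ C * ∫ x in Ω, |u₀ x - v₀ x| := by
  have hf_cont : Continuous f := hf_smooth.continuous
  have hg_cont : Continuous g := hg_smooth.continuous
  have hCinf : 0 ≤ Cinf := le_trans (abs_nonneg _) (hw_bdd (fun _ => 0) (fun _ => 0))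
  set c1 : ℝ := ((1+γ)*L + γ*K) * Cinf with hc1def
  set c2 : ℝ := γ * K * Cw with hc2def
  have hc1 : 0 ≤ c1 := mul_nonneg (by nlinarith) hCinf
  have hc2 : 0 ≤ c2 := mul_nonneg (mul_nonneg hγ hK) hCw.le
  set M : ℝ := (volume Ω).toReal with hMdef
  have hM : 0 ≤ M := ENNReal.toReal_nonneg
  set d : ℝ := 2*(1+c2) + 4*c1*M + 1 with hddef
  have hd : 0 < d := by nlinarith [mul_nonneg hc1 hM]
  set ρ : ℝ := 1 / d with hρdef
  have hρ : 0 < ρ := by positivity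
  have hρd : ρ * d = 1 := one_div_mul_cancel hd.ne'
  have key1 : ρ * (1 + c2) ≤ 1/2 := by
    nlinarith [mul_le_mul_of_nonneg_left
      (show 2*(1+c2) ≤ d by nlinarith [mul_nonneg hc1 hM]) hρ.le]
  have key2 : 2 * ρ * c1 * M ≤ 1/2 := by
    nlinarith [mul_le_mul_of_nonneg_left
      (show 4*c1*M ≤ d by nlinarith) hρ.le]
  refine ⟨ρ, hρ, 4, by norm_num, ?_⟩
  intro u₀ v₀ hu₀ hv₀ u v hum hvm huint hvint hucont hvcont hu0 hv0 huode hvode t ht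
  have hu_slice : ∀ s, Measurable fun y => u y s :=
    fun s => hum.comp (measurable_id.prodMk measurable_const)
  have hv_slice : ∀ s, Measurable fun y => v y s :=
    fun s => hvm.comp (measurable_id.prodMk measurable_const)
  have hwx_meas : ∀ x, Measurable (w x) :=
    fun x => hw_meas.comp (measurable_const.prodMk measurable_id)
  set A : ℝ → ℝ := fun s => ∫ x in Ω, |u x s - v x s| with hAdef
  have hA_nonneg : ∀ s, 0 ≤ A s := fun s => integral_nonneg (fun x => abs_nonneg _)
  have hdiff : ∀ s ∈ Icc (0:ℝ) ρ, IntegrableOn (fun x => |u x s - v x s|) Ω :=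
    fun s hs => ((huint s hs).sub (hvint s hs)).abs
  have h0mem : (0:ℝ) ∈ Icc (0:ℝ) ρ := ⟨le_rfl, hρ.le⟩
  -- continuity of A
  have hA_cont : ContinuousOn A (Icc 0 ρ) := by
    intro t₀ ht₀
    have hb : ∀ s ∈ Icc (0:ℝ) ρ, |A s - A t₀| ≤
        (∫ x in Ω, |u x s - u x t₀|) + ∫ x in Ω, |v x s - v x t₀| := by
      intro s hs
      have e : A s - A t₀ = ∫ x in Ω, (|u x s - v x s| - |u x t₀ - v x t₀|) :=
        (integral_sub (hdiff s hs) (hdiff t₀ ht₀)).symm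
      rw [e]
      have step1 : |∫ x in Ω, (|u x s - v x s| - |u x t₀ - v x t₀|)| ≤
          ∫ x in Ω, abs (|u x s - v x s| - |u x t₀ - v x t₀|) := by
        simpa [Real.norm_eq_abs] using
          MeasureTheory.norm_integral_le_integral_norm (μ := volume.restrict Ω)
            (fun x => |u x s - v x s| - |u x t₀ - v x t₀|)
      refine le_trans step1 ?_
      have step2 : ∫ x in Ω, abs (|u x s - v x s| - |u x t₀ - v x t₀|) ≤
          ∫ x in Ω, (|u x s - u x t₀| + |v x s - v x t₀|) := by
        refine setIntegral_mono_on ((hdiff s hs).sub (hdiff t₀ ht₀)).abs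
          ((((huint s hs).sub (huint t₀ ht₀)).abs).add
            (((hvint s hs).sub (hvint t₀ ht₀)).abs)) hΩ_meas ?_
        intro x _
        refine le_trans (abs_abs_sub_abs_le_abs_sub _ _) ?_
        have e2 : (u x s - v x s) - (u x t₀ - v x t₀) =
            (u x s - u x t₀) - (v x s - v x t₀) := by ring
        rw [e2]
        exact abs_sub _ _
      refine le_trans step2 ?_
      exact (integral_add (((huint s hs).sub (huint t₀ ht₀)).abs)
        (((hvint s hs).sub (hvint t₀ ht₀)).abs)).le
    have hzero : Filter.Tendsto (fun s => A s - A t₀) (nhdsWithin t₀ (Icc 0 ρ)) (nhds 0) := by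
      refine squeeze_zero_norm' ?_ (by simpa using (hucont t₀ ht₀).add (hvcont t₀ ht₀))
      filter_upwards [self_mem_nhdsWithin] with s hs
      simpa [Real.norm_eq_abs] using hb s hs
    have := hzero.add_const (A t₀)
    simpa [ContinuousWithinAt] using this
  -- max of A
  obtain ⟨ts, hts, htsmax'⟩ := isCompact_Icc.exists_isMaxOn (nonempty_Icc.2 hρ.le) hA_cont
  have htsmax : ∀ s ∈ Icc (0:ℝ) ρ, A s ≤ A ts := fun s hs => htsmax' hs
  set SA : ℝ := A ts with hSAdef
  have hSA0 : 0 ≤ SA := hA_nonneg ts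
  -- per-x estimate
  have hper : ∀ x ∈ Ω, ∀ τ ∈ Icc (0:ℝ) ρ,
      |u x τ - v x τ| ≤ 2 * |u x 0 - v x 0| + 2 * ρ * c1 * SA := by
    intro x hx
    set Iu : ℝ → ℝ := fun s => ∫ y in Ω, w x y * (1 + γ * g (u x s - u y s)) * f (u y s)
      with hIudef
    set Iv : ℝ → ℝ := fun s => ∫ y in Ω, w x y * (1 + γ * g (v x s - v y s)) * f (v y s)
      with hIvdef
    set D : ℝ → ℝ := fun s => (-(u x s) + Iu s) - (-(v x s) + Iv s) with hDdef
    have hD : ∀ s ∈ Icc (0:ℝ) ρ,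
        HasDerivWithinAt (fun σ => u x σ - v x σ) (D s) (Icc 0 ρ) s :=
      fun s hs => (huode x hx s hs).sub (hvode x hx s hs)
    have hu_cx : ContinuousOn (u x) (Icc 0 ρ) :=
      fun s hs => (huode x hx s hs).continuousWithinAt
    have hv_cx : ContinuousOn (v x) (Icc 0 ρ) :=
      fun s hs => (hvode x hx s hs).continuousWithinAt
    have hh_c : ContinuousOn (fun σ => u x σ - v x σ) (Icc 0 ρ) := hu_cx.sub hv_cx
    have hIu_c : ContinuousOn Iu (Icc 0 ρ) :=
      aux_cont Ω hΩ_meas w Cinf Cw x (hwx_meas x) (hw_int x) (hw_bdd x) (hw_L1 x)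
        f g hf_cont hg_cont hf_range hg_range L K γ hL hK hγ hf_lip hg_lip
        ρ u hu_slice huint hucont hu_cx
    have hIv_c : ContinuousOn Iv (Icc 0 ρ) :=
      aux_cont Ω hΩ_meas w Cinf Cw x (hwx_meas x) (hw_int x) (hw_bdd x) (hw_L1 x)
        f g hf_cont hg_cont hf_range hg_range L K γ hL hK hγ hf_lip hg_lip
        ρ v hv_slice hvint hvcont hv_cx
    have hD_c : ContinuousOn D (Icc 0 ρ) :=
      (hu_cx.neg.add hIu_c).sub (hv_cx.neg.add hIv_c)
    -- max of |h|
    obtain ⟨σs, hσs, hσsmax'⟩ := isCompact_Icc.exists_isMaxOn (nonempty_Icc.2 hρ.le) hh_c.abs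
    have hσsmax : ∀ s ∈ Icc (0:ℝ) ρ, |u x s - v x s| ≤ |u x σs - v x σs| :=
      fun s hs => hσsmax' hs
    set px : ℝ := |u x σs - v x σs| with hpxdef
    have hpx0 : 0 ≤ px := abs_nonneg _
    -- bound on D
    have hDb : ∀ s ∈ Icc (0:ℝ) ρ, |D s| ≤ (1 + c2) * px + c1 * SA := by
      intro s hs
      have e : D s = -(u x s - v x s) + (Iu s - Iv s) := by rw [hDdef]; ring
      have hIuv : |Iu s - Iv s| ≤ c1 * A s + c2 * |u x s - v x s| := by
        have := aux_key Ω hΩ_meas w Cinf Cw x (hwx_meas x) (hw_int x) (hw_bdd x) (hw_L1 x)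
          f g hf_cont hg_cont hf_range hg_range L K γ hL hK hγ hf_lip hg_lip
          (fun y => u y s) (fun y => v y s) (hu_slice s) (hv_slice s)
          (huint s hs) (hvint s hs)
        simpa [hIudef, hIvdef, hc1def, hc2def, hAdef] using this
      have h1 : |u x s - v x s| ≤ px := hσsmax s hs
      have h2 : A s ≤ SA := htsmax s hs
      have := abs_add_le (-(u x s - v x s)) (Iu s - Iv s)
      rw [← e, abs_neg] at this
      have hc1As : c1 * A s ≤ c1 * SA := mul_le_mul_of_nonneg_left h2 hc1
      have hc2h : c2 * |u x s - v x s| ≤ c2 * px := mul_le_mul_of_nonneg_left h1 hc2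
      linarith
    -- FTC bound for each τ
    have hmain : ∀ τ ∈ Icc (0:ℝ) ρ,
        |u x τ - v x τ| ≤ |u x 0 - v x 0| + ρ * ((1 + c2) * px + c1 * SA) := by
      intro τ hτ
      have hsub : Icc (0:ℝ) τ ⊆ Icc 0 ρ := Icc_subset_Icc_right hτ.2
      have hDτ_c : ContinuousOn D (uIcc 0 τ) := by
        rw [uIcc_of_le hτ.1]; exact hD_c.mono hsub
      have hftc : ∫ s in (0:ℝ)..τ, D s = (u x τ - v x τ) - (u x 0 - v x 0) := by
        refine intervalIntegral.integral_eq_sub_of_hasDeriv_right_of_le hτ.1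
          (hh_c.mono hsub) (fun s hs => ?_) hDτ_c.intervalIntegrable
        exact (hD s ⟨hs.1.le, hs.2.le.trans hτ.2⟩).mono_of_mem_nhdsWithin
          (Icc_mem_nhdsGT_of_mem ⟨hs.1.le, hs.2.trans_le hτ.2⟩)
      have hconst : (0:ℝ) ≤ (1 + c2) * px + c1 * SA := by
        nlinarith [mul_nonneg hc1 hSA0, mul_nonneg hc2 hpx0]
      have hIabs : |∫ s in (0:ℝ)..τ, D s| ≤ ∫ s in (0:ℝ)..τ, |D s| :=
        intervalIntegral.abs_integral_le_integral_abs hτ.1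
      have hImono : ∫ s in (0:ℝ)..τ, |D s| ≤ ∫ s in (0:ℝ)..τ, ((1 + c2) * px + c1 * SA) := by
        refine intervalIntegral.integral_mono_on hτ.1 ?_ intervalIntegrable_const ?_
        · exact ((hDτ_c.abs)).intervalIntegrable
        · intro s hs; exact hDb s (hsub hs)
      have hIconst : ∫ s in (0:ℝ)..τ, ((1 + c2) * px + c1 * SA) =
          τ * ((1 + c2) * px + c1 * SA) := by
        rw [intervalIntegral.integral_const]; simp [smul_eq_mul]
      have hτρ : τ * ((1 + c2) * px + c1 * SA) ≤ ρ * ((1 + c2) * px + c1 * SA) :=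
        mul_le_mul_of_nonneg_right hτ.2 hconst
      have : |(u x τ - v x τ) - (u x 0 - v x 0)| ≤ ρ * ((1 + c2) * px + c1 * SA) := by
        rw [← hftc]; linarith [hIabs, hImono, hIconst.le, hτρ]
      have habs := abs_sub_abs_le_abs_sub (u x τ - v x τ) (u x 0 - v x 0)
      linarith
    -- close the loop at the maximizer σs
    have hpxb : px ≤ 2 * |u x 0 - v x 0| + 2 * ρ * c1 * SA := by
      have h1 := hmain σs hσs
      rw [← hpxdef] at h1
      have h2 : ρ * ((1 + c2) * px) ≤ (1/2) * px := by
        nlinarith [mul_le_mul_of_nonneg_right key1 hpx0]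
      nlinarith [mul_nonneg (mul_nonneg hρ.le hc1) hSA0]
    intro τ hτ
    exact le_trans (hσsmax τ hτ) hpxb
  -- integrate over Ω
  have hglob : ∀ τ ∈ Icc (0:ℝ) ρ, A τ ≤ 2 * A 0 + M * (2 * ρ * c1 * SA) := by
    intro τ hτ
    have hrhs_int : IntegrableOn
        (fun x => 2 * |u x 0 - v x 0| + 2 * ρ * c1 * SA) Ω := by
      refine ((hdiff 0 h0mem).const_mul 2).add ?_
      exact (integrableOn_const hΩ_bdd.measure_lt_top.ne)
    have step : A τ ≤ ∫ x in Ω, (2 * |u x 0 - v x 0| + 2 * ρ * c1 * SA) := by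
      refine setIntegral_mono_on (hdiff τ hτ) hrhs_int hΩ_meas ?_
      intro x hx; exact hper x hx τ hτ
    refine le_trans step ?_
    rw [integral_add ((hdiff 0 h0mem).const_mul 2)
      (integrableOn_const hΩ_bdd.measure_lt_top.ne),
      MeasureTheory.integral_const_mul, setIntegral_const, smul_eq_mul, Measure.real]
  have hSAb : SA ≤ 4 * A 0 := by
    have h1 := hglob ts hts
    rw [← hSAdef] at h1
    have h2 : M * (2 * ρ * c1 * SA) ≤ (1/2) * SA := by
      nlinarith [mul_le_mul_of_nonneg_right key2 hSA0]
    have h3 : 0 ≤ A 0 := hA_nonneg 0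
    nlinarith
  have hA0 : A 0 = ∫ x in Ω, |u₀ x - v₀ x| := by
    refine setIntegral_congr_fun hΩ_meas ?_
    intro x hx
    show |u x 0 - v x 0| = |u₀ x - v₀ x|
    rw [hu0 x hx, hv0 x hx]
  calc A t ≤ SA := htsmax t ht
    _ ≤ 4 * A 0 := hSAb
    _ = 4 * ∫ x in Ω, |u₀ x - v₀ x| := by rw [hA0]
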